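/- Let $X, V$ be Banach spaces and $G: X \to V$ be continuously Fréchet differentiable such that $DG(x): X \to V$ is an isomorphism for every $x$ with $\|DG(x)\|_{X\to V} \leq C_1$ and $\|DG(x)^{-1}\|_{V\to X} \leq C_{-1}$ uniformly in $x$. Then for all $x, y \in X$: $C_1^{-1} \|G(x)-G(y)\|_V \leq \|x-y\|_X \leq C_{-1} \|G(x)-G(y)\|_V$. -/

import Mathlib

open Set Metric Filter NNReal

namespace Stmt11Aux

set_option linter.unusedSectionVars false

variable {X V : Type*} [NormedAddCommGroup X] [NormedSpace ℝ X] [CompleteSpace X]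
  [NormedAddCommGroup V] [NormedSpace ℝ V]

/-- Gluing two `ContinuousOn` functions on adjacent intervals. -/
lemma glue {Y : Type*} [TopologicalSpace Y] {a b c : ℝ} {f g : ℝ → Y}
    (hf : ContinuousOn f (Icc a b)) (hg : ContinuousOn g (Icc b c))
    (heq : f b = g b) (hab : a ≤ b) (hbc : b ≤ c) :
    ContinuousOn (fun s => if s ≤ b then f s else g s) (Icc a c) := by
  rw [← Icc_union_Icc_eq_Icc hab hbc]
  have h1 : ContinuousOn (fun s => if s ≤ b then f s else g s) (Icc a b) := by
    apply hf.congr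
    intro z hz
    simp [hz.2]
  have h2 : ContinuousOn (fun s => if s ≤ b then f s else g s) (Icc b c) := by
    apply hg.congr
    intro z hz
    rcases lt_or_eq_of_le hz.1 with h | h
    · simp [not_le.2 h]
    · simp [← h, heq]
  intro z hz
  rcases hz with hz | hz
  · refine (h1 z hz).union ?_
    rcases lt_or_eq_of_le hz.2 with h | h
    · apply continuousWithinAt_of_notMem_closure
      rw [closure_Icc]  -- may fail if Icc b c empty; handle
      intro hmem
      exact absurd hmem.1 (not_le.2 h)
    · exact h2 z (by rw [h]; exact left_mem_Icc.2 hbc)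
  · refine ContinuousWithinAt.union ?_ (h2 z hz)
    rcases lt_or_eq_of_le hz.1 with h | h
    · apply continuousWithinAt_of_notMem_closure
      rw [closure_Icc]
      intro hmem
      exact absurd hmem.2 (not_le.2 h)
    · exact h1 z (by rw [← h]; exact right_mem_Icc.2 hab)


section

variable {G : X → V} {K : ℝ}

/-- Local antilipschitz (injectivity) property with uniform constant `K`. -/
def Loc (G : X → V) (K : ℝ) : Prop :=
  ∀ a : X, ∃ r > 0, ∀ u ∈ ball a r, ∀ v ∈ ball a r, ‖u - v‖ ≤ K * ‖G u - G v‖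

/-- Uniqueness of lifts. -/
lemma uniq (hloc : Loc G K) {T : ℝ} {c₁ c₂ : ℝ → X}
    (h₁ : ContinuousOn c₁ (Icc 0 T)) (h₂ : ContinuousOn c₂ (Icc 0 T))
    (hG : ∀ s ∈ Icc (0:ℝ) T, G (c₁ s) = G (c₂ s)) (h0 : c₁ 0 = c₂ 0) :
    EqOn c₁ c₂ (Icc 0 T) := by
  rcases le_or_gt 0 T with hT | hT
  · have : Icc (0:ℝ) T ⊆ {t | c₁ t = c₂ t} := by
      apply IsClosed.Icc_subset_of_forall_mem_nhdsWithin
      · have : {t | c₁ t = c₂ t} ∩ Icc 0 T = Icc 0 T ∩ (fun t => c₁ t - c₂ t) ⁻¹' {0} := by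
          ext t
          constructor
          · rintro ⟨ht, ht2⟩; exact ⟨ht2, by simp [sub_eq_zero.2 ht]⟩
          · rintro ⟨ht2, ht⟩
            simp only [mem_preimage, mem_singleton_iff, sub_eq_zero] at ht
            exact ⟨ht, ht2⟩
        rw [this]
        exact (h₁.sub h₂).preimage_isClosed_of_isClosed isClosed_Icc isClosed_singleton
      · exact h0
      · rintro t ⟨ht, htT⟩
        obtain ⟨r, hr, hAL⟩ := hloc (c₁ t)
        have hc₁ := Metric.continuousWithinAt_iff.1 (h₁ t (Ico_subset_Icc_self htT)) r hr
        have hc₂ := Metric.continuousWithinAt_iff.1 (h₂ t (Ico_subset_Icc_self htT)) r hr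
        obtain ⟨δ₁, hδ₁, hb₁⟩ := hc₁
        obtain ⟨δ₂, hδ₂, hb₂⟩ := hc₂
        rw [mem_nhdsGT_iff_exists_Ioc_subset]
        refine ⟨min T (t + min δ₁ δ₂ / 2), ?_, ?_⟩
        · simp only [mem_Ioi, lt_min_iff]
          exact ⟨htT.2, by linarith [lt_min hδ₁ hδ₂]⟩
        · intro t' ht'
          have ht'I : t' ∈ Icc (0:ℝ) T :=
            ⟨le_trans htT.1 ht'.1.le, le_trans ht'.2 (min_le_left _ _)⟩
          have hd : dist t' t < min δ₁ δ₂ := by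
            rw [Real.dist_eq, abs_of_nonneg (by linarith [ht'.1.le])]
            have := le_trans ht'.2 (min_le_right _ _)
            have : t' - t ≤ min δ₁ δ₂ / 2 := by linarith
            linarith [lt_min hδ₁ hδ₂]
          have hu : c₁ t' ∈ ball (c₁ t) r := by
            rw [mem_ball]
            exact hb₁ ht'I (lt_of_lt_of_le hd (min_le_left _ _))
          have hv : c₂ t' ∈ ball (c₁ t) r := by
            rw [mem_ball, ht]
            exact hb₂ ht'I (lt_of_lt_of_le hd (min_le_right _ _))
          have := hAL _ hu _ hv
          rw [hG t' ht'I] at this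
          simp only [sub_self, norm_zero, mul_zero] at this
          have : ‖c₁ t' - c₂ t'‖ ≤ 0 := this
          simpa [sub_eq_zero] using le_antisymm this (norm_nonneg _)
    exact fun t ht => this ht
  · intro t ht
    exact absurd (le_trans ht.1 ht.2) (not_le.2 hT)

/-- A lift of an `L`-Lipschitz path moves with speed at most `K * L`. -/
lemma lip (hloc : Loc G K) (hK0 : 0 ≤ K) {L u T : ℝ} {σ : ℝ → V} {c : ℝ → X}
    (hσ : ∀ s ∈ Icc u T, ∀ t ∈ Icc u T, ‖σ s - σ t‖ ≤ L * |s - t|)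
    (hc : ContinuousOn c (Icc u T)) (hlift : ∀ s ∈ Icc u T, G (c s) = σ s) :
    ∀ t ∈ Icc u T, ‖c t - c u‖ ≤ K * L * (t - u) := by
  rcases le_or_gt u T with hT | hT
  · have : Icc u T ⊆ {t | ‖c t - c u‖ ≤ K * L * (t - u)} := by
      apply IsClosed.Icc_subset_of_forall_mem_nhdsWithin
      · have : {t | ‖c t - c u‖ ≤ K * L * (t - u)} ∩ Icc u T =
            Icc u T ∩ (fun t => ‖c t - c u‖ - K * L * (t - u)) ⁻¹' Iic 0 := by
          ext t
          simp only [mem_inter_iff, mem_setOf_eq, mem_preimage, mem_Iic]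
          constructor
          · rintro ⟨h1, h2⟩; exact ⟨h2, by linarith⟩
          · rintro ⟨h1, h2⟩; exact ⟨by linarith, h1⟩
        rw [this]
        refine ContinuousOn.preimage_isClosed_of_isClosed ?_ isClosed_Icc isClosed_Iic
        exact ((hc.sub (continuousOn_const.congr (fun z hz => rfl))).norm.sub
          (continuous_const.mul (continuous_sub_right u)).continuousOn)
      · simp
      · rintro t ⟨ht, htT⟩
        obtain ⟨r, hr, hAL⟩ := hloc (c t)
        obtain ⟨δ, hδ, hb⟩ := Metric.continuousWithinAt_iff.1 (hc t (Ico_subset_Icc_self htT)) r hr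
        rw [mem_nhdsGT_iff_exists_Ioc_subset]
        refine ⟨min T (t + δ / 2), ?_, ?_⟩
        · simp only [mem_Ioi, lt_min_iff]
          exact ⟨htT.2, by linarith⟩
        · intro t' ht'
          have ht'I : t' ∈ Icc u T :=
            ⟨le_trans htT.1 ht'.1.le, le_trans ht'.2 (min_le_left _ _)⟩
          have hd : dist t' t < δ := by
            rw [Real.dist_eq, abs_of_nonneg (by linarith [ht'.1.le])]
            have : t' - t ≤ δ / 2 := by
              have := le_trans ht'.2 (min_le_right _ _); linarith
            linarith
          have hu : c t' ∈ ball (c t) r := by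
            rw [mem_ball]; exact hb ht'I hd
          have h1 : ‖c t' - c t‖ ≤ K * ‖G (c t') - G (c t)‖ :=
            hAL _ hu _ (mem_ball_self hr)
          rw [hlift t' ht'I, hlift t (Ico_subset_Icc_self htT)] at h1
          have h2 : ‖σ t' - σ t‖ ≤ L * |t' - t| :=
            hσ t' ht'I t (Ico_subset_Icc_self htT)
          have habs : |t' - t| = t' - t := abs_of_nonneg (by linarith [ht'.1.le])
          have hσn : (0:ℝ) ≤ ‖σ t' - σ t‖ := norm_nonneg _
          have hLpos : 0 ≤ L * (t' - t) := le_trans hσn (by rwa [habs] at h2)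
          calc ‖c t' - c u‖ ≤ ‖c t' - c t‖ + ‖c t - c u‖ := norm_sub_le_norm_sub_add_norm_sub _ _ _
            _ ≤ K * (L * (t' - t)) + K * L * (t - u) := by
                refine add_le_add (le_trans h1 ?_) ht
                refine mul_le_mul_of_nonneg_left ?_ hK0
                rwa [habs] at h2
            _ = K * L * (t' - u) := by ring
    exact fun t ht => this ht
  · intro t ht
    exact absurd (le_trans ht.1 ht.2) (not_le.2 hT)

/-- Charts: `G` restricts to a partial homeomorphism around every point, on whose source it is
`K`-antilipschitz. -/
def Chart (G : X → V) (K : ℝ) : Prop :=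
  ∀ a : X, ∃ e : OpenPartialHomeomorph X V, (∀ z, e z = G z) ∧ a ∈ e.source ∧
    ∀ u ∈ e.source, ∀ v ∈ e.source, ‖u - v‖ ≤ K * ‖G u - G v‖

lemma Chart.loc (hch : Chart G K) : Loc G K := by
  intro a
  obtain ⟨e, -, ha, hAL⟩ := hch a
  obtain ⟨r, hr, hball⟩ := Metric.isOpen_iff.1 e.open_source a ha
  exact ⟨r, hr, fun u hu v hv => hAL u (hball hu) v (hball hv)⟩

/-- Uniform antilipschitz radius along a compact set. -/
lemma tube (hloc : Loc G K) {Kc : Set X} (hKc : IsCompact Kc) :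
    ∃ ρ > 0, ∀ a ∈ Kc, ∀ u ∈ closedBall a ρ, ∀ v ∈ closedBall a ρ,
      ‖u - v‖ ≤ K * ‖G u - G v‖ := by
  choose r hr hAL using hloc
  obtain ⟨δ, hδ, hleb⟩ := lebesgue_number_lemma_of_metric hKc
    (fun b : X => isOpen_ball (x := b) (ε := r b)) (fun a _ => mem_iUnion.2 ⟨a, mem_ball_self (hr a)⟩)
  refine ⟨δ / 2, by linarith, fun a ha u hu v hv => ?_⟩
  obtain ⟨b, hb⟩ := hleb a ha
  have h2 : closedBall a (δ / 2) ⊆ ball b (r b) :=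
    le_trans (closedBall_subset_ball (by linarith)) hb
  exact hAL b u (h2 hu) v (h2 hv)

/-- Two lifts starting at the same point and staying `G`-close remain in a tube. -/
lemma pert {ρ : ℝ} (hρ : 0 < ρ) {c c' : ℝ → X}
    (hAL : ∀ t ∈ Icc (0:ℝ) 1, ∀ u ∈ closedBall (c t) ρ, ∀ v ∈ closedBall (c t) ρ,
      ‖u - v‖ ≤ K * ‖G u - G v‖)
    (hc : ContinuousOn c (Icc 0 1)) (hc' : ContinuousOn c' (Icc 0 1)) (h0 : c' 0 = c 0)
    (hdiff : ∀ t ∈ Icc (0:ℝ) 1, K * ‖G (c' t) - G (c t)‖ ≤ ρ / 2) :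
    ∀ t ∈ Icc (0:ℝ) 1, ‖c' t - c t‖ ≤ ρ := by
  have : Icc (0:ℝ) 1 ⊆ {t | ‖c' t - c t‖ ≤ ρ} := by
    apply IsClosed.Icc_subset_of_forall_mem_nhdsWithin
    · have : {t | ‖c' t - c t‖ ≤ ρ} ∩ Icc (0:ℝ) 1 =
          Icc (0:ℝ) 1 ∩ (fun t => ‖c' t - c t‖) ⁻¹' Iic ρ := by
        ext t
        simp only [mem_inter_iff, mem_setOf_eq, mem_preimage, mem_Iic]
        tauto
      rw [this]
      exact ContinuousOn.preimage_isClosed_of_isClosed (hc'.sub hc).norm isClosed_Icc isClosed_Iic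
    · simp [h0, hρ.le]
    · rintro t ⟨ht, htI⟩
      have htIcc : t ∈ Icc (0:ℝ) 1 := Ico_subset_Icc_self htI
      have hhalf : ‖c' t - c t‖ ≤ ρ / 2 := by
        have h1 := hAL t htIcc (c' t) (by rwa [mem_closedBall, dist_eq_norm]) (c t)
          (mem_closedBall_self hρ.le)
        exact le_trans h1 (hdiff t htIcc)
      obtain ⟨δ₁, hδ₁, hb₁⟩ := Metric.continuousWithinAt_iff.1 (hc' t htIcc) (ρ/4) (by linarith)
      obtain ⟨δ₂, hδ₂, hb₂⟩ := Metric.continuousWithinAt_iff.1 (hc t htIcc) (ρ/4) (by linarith)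
      rw [mem_nhdsGT_iff_exists_Ioc_subset]
      refine ⟨min 1 (t + min δ₁ δ₂ / 2), ?_, ?_⟩
      · simp only [mem_Ioi, lt_min_iff]
        exact ⟨htI.2, by linarith [lt_min hδ₁ hδ₂]⟩
      · intro t' ht'
        have ht'I : t' ∈ Icc (0:ℝ) 1 :=
          ⟨le_trans htI.1 ht'.1.le, le_trans ht'.2 (min_le_left _ _)⟩
        have hd : dist t' t < min δ₁ δ₂ := by
          rw [Real.dist_eq, abs_of_nonneg (by linarith [ht'.1.le])]
          have : t' - t ≤ min δ₁ δ₂ / 2 := by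
            have := le_trans ht'.2 (min_le_right _ _); linarith
          linarith [lt_min hδ₁ hδ₂]
        have e₁ : dist (c' t') (c' t) < ρ/4 := hb₁ ht'I (lt_of_lt_of_le hd (min_le_left _ _))
        have e₂ : dist (c t') (c t) < ρ/4 := hb₂ ht'I (lt_of_lt_of_le hd (min_le_right _ _))
        show ‖c' t' - c t'‖ ≤ ρ
        rw [← dist_eq_norm]
        have hh : dist (c' t) (c t) ≤ ρ/2 := by rwa [dist_eq_norm]
        calc dist (c' t') (c t') ≤ dist (c' t') (c' t) + dist (c' t) (c t') :=
              dist_triangle _ _ _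
          _ ≤ dist (c' t') (c' t) + (dist (c' t) (c t) + dist (c t) (c t')) := by
              linarith [dist_triangle (c' t) (c t) (c t')]
          _ ≤ ρ := by rw [dist_comm (c t) (c t')]; linarith
  exact fun t ht => this ht

/-- Existence of lifts of Lipschitz paths through `G`. -/
lemma exist (hch : Chart G K) (hGc : Continuous G) (hK0 : 0 ≤ K) {L : ℝ} (hL : 0 ≤ L)
    {σ : ℝ → V} (hσc : Continuous σ)
    (hσ : ∀ s ∈ Icc (0:ℝ) 1, ∀ t ∈ Icc (0:ℝ) 1, ‖σ s - σ t‖ ≤ L * |s - t|)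
    {y₀ : X} (hy₀ : G y₀ = σ 0) :
    ∃ c : ℝ → X, ContinuousOn c (Icc 0 1) ∧ c 0 = y₀ ∧ ∀ s ∈ Icc (0:ℝ) 1, G (c s) = σ s := by
  set P : ℝ → (ℝ → X) → Prop := fun t c =>
    ContinuousOn c (Icc 0 t) ∧ c 0 = y₀ ∧ ∀ s ∈ Icc (0:ℝ) t, G (c s) = σ s with hP
  set S : Set ℝ := {t | t ∈ Icc (0:ℝ) 1 ∧ ∃ c, P t c} with hSdef
  have h0S : (0:ℝ) ∈ S := ⟨⟨le_refl 0, zero_le_one⟩, fun _ => y₀, continuousOn_const, rfl,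
    fun s hs => by rw [show s = 0 from le_antisymm hs.2 hs.1, hy₀]⟩
  have hbdd : BddAbove S := ⟨1, fun z hz => hz.1.2⟩
  have hSne : S.Nonempty := ⟨0, h0S⟩
  set T := sSup S with hTdef
  have hT0 : 0 ≤ T := le_csSup hbdd h0S
  have hT1 : T ≤ 1 := csSup_le hSne (fun z hz => hz.1.2)
  have hdown : ∀ t, 0 ≤ t → t < T → ∃ c, P t c := by
    intro t h0t htT
    obtain ⟨s, hsS, hts⟩ := exists_lt_of_lt_csSup hSne htT
    obtain ⟨c, hc1, hc2, hc3⟩ := hsS.2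
    exact ⟨c, hc1.mono (Icc_subset_Icc_right hts.le), hc2,
      fun z hz => hc3 z ⟨hz.1, hz.2.trans hts.le⟩⟩
  have hTS : ∃ c, P T c := by
    rcases eq_or_lt_of_le hT0 with h0 | h0
    · obtain ⟨c, hc⟩ := h0S.2; exact ⟨c, by rwa [← h0]⟩
    have hch' : ∀ t : ℝ, ∃ c, 0 ≤ t → t < T → P t c := by
      intro t
      by_cases h : 0 ≤ t ∧ t < T
      · obtain ⟨c, hc⟩ := hdown t h.1 h.2; exact ⟨c, fun _ _ => hc⟩
      · exact ⟨fun _ => y₀, fun h1 h2 => absurd ⟨h1, h2⟩ h⟩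
    choose f hf using hch'
    set cb : ℝ → X := fun s => f s s with hcbdef
    have hcoh : ∀ v, 0 ≤ v → v < T → EqOn cb (f v) (Icc 0 v) := by
      intro v h0v hvT s hs
      have hsT : s < T := lt_of_le_of_lt hs.2 hvT
      obtain ⟨hc1, hc2, hc3⟩ := hf s hs.1 hsT
      obtain ⟨hd1, hd2, hd3⟩ := hf v h0v hvT
      have := uniq hch.loc hc1 (hd1.mono (Icc_subset_Icc_right hs.2))
        (fun z hz => by rw [hc3 z hz, hd3 z ⟨hz.1, hz.2.trans hs.2⟩]) (hc2.trans hd2.symm)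
      exact this (right_mem_Icc.2 hs.1)
    have hcblift : ∀ s, 0 ≤ s → s < T → G (cb s) = σ s := fun s h0s hsT =>
      (hf s h0s hsT).2.2 s (right_mem_Icc.2 h0s)
    have hcb0 : cb 0 = y₀ := (hf 0 le_rfl h0).2.1
    have hcbcont : ∀ v, 0 ≤ v → v < T → ContinuousOn cb (Icc 0 v) := fun v h0v hvT =>
      ((hf v h0v hvT).1).congr (hcoh v h0v hvT)
    have hIccsub : ∀ v, v < T → Icc (0:ℝ) v ⊆ Icc (0:ℝ) 1 := fun v hvT =>
      Icc_subset_Icc_right (le_trans hvT.le hT1)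
    have hlipcb : ∀ u v, 0 ≤ u → u ≤ v → v < T → ‖cb v - cb u‖ ≤ K * L * (v - u) := by
      intro u v h0u huv hvT
      have h0v : 0 ≤ v := h0u.trans huv
      have hsub : Icc u v ⊆ Icc (0:ℝ) v := Icc_subset_Icc_left h0u
      have := lip hch.loc hK0 (σ := σ) (u := u) (T := v) (c := cb)
        (fun s hs t ht => hσ s (hIccsub v hvT (hsub hs)) t (hIccsub v hvT (hsub ht)))
        ((hcbcont v h0v hvT).mono hsub)
        (fun s hs => hcblift s (h0u.trans hs.1) (lt_of_le_of_lt hs.2 hvT))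
      exact this v (right_mem_Icc.2 huv)
    set tseq : ℕ → ℝ := fun n => T - T / (n + 1) with htseqdef
    have htn0 : ∀ n : ℕ, 0 ≤ tseq n := by
      intro n
      have h1 : T / (n + 1) ≤ T / 1 := by
        apply div_le_div_of_nonneg_left h0.le one_pos
        exact_mod_cast Nat.succ_le_succ (Nat.zero_le n)
      simp only [htseqdef, div_one] at h1 ⊢
      linarith
    have htnT : ∀ n : ℕ, tseq n < T := by
      intro n
      have : 0 < T / (n + 1) := div_pos h0 (by positivity)
      simp only [htseqdef]; linarith
    have hdiv1 : Tendsto (fun n : ℕ => T / ((n : ℝ) + 1)) atTop (nhds 0) := by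
      have h2 := (tendsto_const_div_atTop_nhds_zero_nat T).comp (tendsto_add_atTop_nat 1)
      have h3 : (fun n : ℕ => T / ((n : ℝ) + 1)) = (fun n : ℕ => T / n) ∘ (fun n => n + 1) := by
        funext n; simp [Function.comp]
      rw [h3]; exact h2
    have htseqT : Tendsto tseq atTop (nhds T) := by
      have := tendsto_const_nhds (x := T) (f := atTop (α := ℕ)) |>.sub hdiv1
      simpa using this
    have hdivmono : ∀ {N m : ℕ}, N ≤ m → T / (↑m + 1) ≤ T / (↑N + 1) := by
      intro N m h
      apply div_le_div_of_nonneg_left h0.le (by positivity)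
      exact_mod_cast Nat.succ_le_succ h
    have hKL : (0:ℝ) ≤ K * L := mul_nonneg hK0 hL
    have hcauchy : CauchySeq (fun n => cb (tseq n)) := by
      apply cauchySeq_of_le_tendsto_0 (fun N : ℕ => K * L * (T / (N + 1)))
      · intro n m N hn hm
        have key : ∀ {i j : ℕ}, tseq j ≤ tseq i → N ≤ j →
            dist (cb (tseq i)) (cb (tseq j)) ≤ K * L * (T / (N + 1)) := by
          intro i j hji hNj
          rw [dist_eq_norm]
          refine le_trans (hlipcb _ _ (htn0 j) hji (htnT i)) ?_
          have h1 : tseq i - tseq j ≤ T / (N + 1) := by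
            have h2 := hdivmono hNj
            have h3 := htnT i
            simp only [htseqdef] at h2 h3 ⊢
            linarith
          nlinarith
        rcases le_total (tseq m) (tseq n) with h | h
        · exact key h hm
        · rw [dist_comm]; exact key h hn
      · simpa using (tendsto_const_nhds (x := K * L)).mul hdiv1
    obtain ⟨z, hz⟩ := cauchySeq_tendsto_of_complete hcauchy
    have hd : ∀ s, 0 ≤ s → s < T → ‖cb s - z‖ ≤ K * L * (T - s) := by
      intro s h0s hsT
      have hten : Tendsto (fun n => ‖cb (tseq n) - cb s‖) atTop (nhds ‖z - cb s‖) :=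
        (hz.sub tendsto_const_nhds).norm
      have hev : ∀ᶠ n in atTop, ‖cb (tseq n) - cb s‖ ≤ K * L * (T - s) := by
        have hev1 : ∀ᶠ n in atTop, s < tseq n := htseqT.eventually (eventually_gt_nhds hsT)
        filter_upwards [hev1] with n hn
        refine le_trans (hlipcb s (tseq n) h0s hn.le (htnT n)) ?_
        nlinarith [htnT n]
      have := le_of_tendsto hten hev
      rwa [norm_sub_rev]
    set c' : ℝ → X := fun s => if s < T then cb s else z with hc'def
    have hGz : G z = σ T := by
      have h1 : Tendsto (fun n => G (cb (tseq n))) atTop (nhds (G z)) :=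
        (hGc.continuousAt.tendsto.comp hz)
      have h2 : (fun n => G (cb (tseq n))) = fun n => σ (tseq n) :=
        funext fun n => hcblift _ (htn0 n) (htnT n)
      rw [h2] at h1
      exact tendsto_nhds_unique h1 (hσc.continuousAt.tendsto.comp htseqT)
    have hest : ∀ u v, 0 ≤ u → u ≤ v → v ≤ T → ‖c' v - c' u‖ ≤ K * L * (v - u) := by
      intro u v h0u huv hvT
      by_cases hv : v < T
      · have hu : u < T := lt_of_le_of_lt huv hv
        simp only [hc'def, if_pos hv, if_pos hu]
        exact hlipcb u v h0u huv hv
      · have hvT' : v = T := le_antisymm hvT (not_lt.1 hv)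
        by_cases hu : u < T
        · simp only [hc'def, if_neg hv, if_pos hu]
          rw [norm_sub_rev, hvT']
          exact hd u h0u hu
        · have huT : u = T := le_antisymm (huv.trans hvT) (not_lt.1 hu)
          simp only [hc'def, if_neg hv, if_neg hu, sub_self, norm_zero]
          nlinarith
    refine ⟨c', ?_, ?_, ?_⟩
    · have hlw : LipschitzOnWith (K * L).toNNReal c' (Icc 0 T) := by
        rw [lipschitzOnWith_iff_dist_le_mul]
        intro p hp q hq
        rw [dist_eq_norm, Real.dist_eq, Real.coe_toNNReal _ hKL]
        rcases le_total q p with h | h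
        · rw [abs_of_nonneg (sub_nonneg.2 h)]
          exact hest q p hq.1 h hp.2
        · rw [abs_of_nonpos (sub_nonpos.2 h), norm_sub_rev]
          have := hest p q hp.1 h hq.2
          linarith
      exact hlw.continuousOn
    · simp only [hc'def, if_pos h0]; exact hcb0
    · intro s hs
      by_cases hsT : s < T
      · simp only [hc'def, if_pos hsT]; exact hcblift s hs.1 hsT
      · have hsT' : s = T := le_antisymm hs.2 (not_lt.1 hsT)
        simp only [hc'def, if_neg hsT]
        rw [hsT', hGz]
  -- Now show `T = 1` by extending the lift through a chart at its endpoint.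
  have hTeq : T = 1 := by
    by_contra hne
    have hTlt : T < 1 := lt_of_le_of_ne hT1 hne
    obtain ⟨c, hc1, hc2, hc3⟩ := hTS
    obtain ⟨e, he, haI, hAL⟩ := hch (c T)
    have hσT : σ T = e (c T) := by
      rw [he (c T)]
      exact (hc3 T (right_mem_Icc.2 hT0)).symm
    have hσTt : σ T ∈ e.target := hσT ▸ e.map_source haI
    obtain ⟨δ, hδ, hball⟩ := Metric.isOpen_iff.1 (e.open_target.preimage hσc) T hσTt
    set t' := min 1 (T + δ / 2) with ht'def
    have hTt' : T < t' := lt_min hTlt (by linarith)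
    have ht'1 : t' ≤ 1 := min_le_left _ _
    have hmem : ∀ s ∈ Icc T t', σ s ∈ e.target := by
      intro s hs
      apply hball
      rw [mem_ball, Real.dist_eq, abs_of_nonneg (by linarith [hs.1])]
      have := hs.2.trans (min_le_right _ _)
      linarith
    set c₂ : ℝ → X := fun s => if s ≤ T then c s else e.symm (σ s) with hc₂def
    have ht'S : t' ∈ S := by
      refine ⟨⟨le_trans hT0 hTt'.le, ht'1⟩, c₂, ?_, ?_, ?_⟩
      · apply glue hc1 ?_ ?_ hT0 hTt'.le
        · exact (e.continuousOn_symm.comp hσc.continuousOn (fun s hs => hmem s hs))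
        · rw [hσT, e.left_inv haI]
      · simp only [hc₂def, if_pos hT0]; exact hc2
      · intro s hs
        by_cases hsT : s ≤ T
        · simp only [hc₂def, if_pos hsT]; exact hc3 s ⟨hs.1, hsT⟩
        · simp only [hc₂def, if_neg hsT]
          rw [← he (e.symm (σ s))]
          exact e.right_inv (hmem s ⟨(not_le.1 hsT).le, hs.2⟩)
    have := le_csSup hbdd ht'S
    rw [← hTdef] at this
    exact absurd this (not_le.2 hTt')
  obtain ⟨c, hc1, hc2, hc3⟩ := hTS
  rw [hTeq] at hc1 hc3
  exact ⟨c, hc1, hc2, hc3⟩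

/-- Construction of charts from a continuously invertible derivative. -/
lemma mk_chart {G' : X → X ≃L[ℝ] V} (hderiv : ∀ x, HasFDerivAt G (G' x : X →L[ℝ] V) x)
    (hcont : Continuous fun x => (G' x : X →L[ℝ] V))
    {Cinv : ℝ} (hbi : ∀ x, ‖((G' x).symm : V →L[ℝ] X)‖ ≤ Cinv) (hK : Cinv < K)
    [Nontrivial X] : Chart G K := by
  intro a
  have hstrict : HasStrictFDerivAt G (G' a : X →L[ℝ] V) a :=
    hasStrictFDerivAt_of_hasFDerivAt_of_continuousAt
      (Filter.Eventually.of_forall (fun y => hderiv y)) hcont.continuousAt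
  set N : ℝ≥0 := ‖((G' a).symm : V →L[ℝ] X)‖₊ with hNdef
  have hNpos : 0 < N := by
    rw [pos_iff_ne_zero]
    intro h0
    have h2 : ((G' a).symm : V →L[ℝ] X) = 0 := by rwa [nnnorm_eq_zero] at h0
    obtain ⟨u, hu⟩ := exists_ne (0 : X)
    have h3 : u = 0 := by
      have := congrArg (fun (T : V →L[ℝ] X) => T ((G' a) u)) h2
      simpa [(G' a).symm_apply_apply] using this
    exact hu h3
  have hKpos : 0 < K := lt_of_le_of_lt ((norm_nonneg _).trans (hbi a)) hK
  set Kn : ℝ≥0 := K.toNNReal with hKndef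
  have hKn : (Kn : ℝ) = K := Real.coe_toNNReal _ hKpos.le
  have hNK : N < Kn := by
    rw [← NNReal.coe_lt_coe, hKn, coe_nnnorm]
    exact lt_of_le_of_lt (hbi a) hK
  have hKninv : Kn⁻¹ < N⁻¹ := by
    apply NNReal.inv_lt_inv (ne_of_gt hNpos) hNK
  set c : ℝ≥0 := N⁻¹ - Kn⁻¹ with hcdef
  have hcpos : 0 < c := tsub_pos_of_lt hKninv
  have hclt : c < N⁻¹ := by
    apply tsub_lt_self
    · rw [pos_iff_ne_zero]; exact inv_ne_zero (ne_of_gt hNpos)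
    · rw [pos_iff_ne_zero]
      exact inv_ne_zero (Real.toNNReal_pos.2 hKpos).ne'
  have hsub : N⁻¹ - c = Kn⁻¹ := tsub_tsub_cancel_of_le hKninv.le
  obtain ⟨s, hs, happrox⟩ := hstrict.approximates_deriv_on_nhds (Or.inr hcpos)
  obtain ⟨r, hr, hball⟩ := Metric.mem_nhds_iff.1 hs
  have happ2 : ApproximatesLinearOn G ((G' a : X →L[ℝ] V)) (ball a r) c :=
    happrox.mono_set hball
  refine ⟨happ2.toOpenPartialHomeomorph G (ball a r) (Or.inr hclt) isOpen_ball,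
    fun z => rfl, ?_, ?_⟩
  · rw [ApproximatesLinearOn.toOpenPartialHomeomorph_source]
    exact mem_ball_self hr
  · intro u hu v hv
    rw [ApproximatesLinearOn.toOpenPartialHomeomorph_source] at hu hv
    have hanti := happ2.antilipschitz (Or.inr hclt)
    have h1 := hanti.le_mul_dist ⟨u, hu⟩ ⟨v, hv⟩
    rw [hsub, inv_inv] at h1
    simpa [Subtype.dist_eq, dist_eq_norm, hKn] using h1

set_option maxHeartbeats 1000000 in
/-- The key quantitative injectivity estimate, by a monodromy argument. -/
lemma key (hch : Chart G K) (hGc : Continuous G) (hKpos : 0 < K)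
    {C₁ : ℝ} (hGlip : ∀ u v : X, ‖G u - G v‖ ≤ C₁ * ‖u - v‖)
    (x y : X) : ‖x - y‖ ≤ K * ‖G x - G y‖ := by
  have hC₁0 : 0 ≤ C₁ * ‖x - y‖ := le_trans (norm_nonneg _) (hGlip x y)
  set γ : ℝ → X := fun s => y + s • (x - y) with hγdef
  set σf : ℝ → V := fun s => G y + s • (G x - G y) with hσfdef
  set D : ℝ → V := fun s => G (γ s) - σf s with hDdef
  set H : ℝ → ℝ → V := fun lam s => G (γ s) - lam • D s with hHdef
  have hγ0 : γ 0 = y := by simp [hγdef]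
  have hγ1 : γ 1 = x := by simp [hγdef]
  have hγcont : Continuous γ := by
    apply continuous_const.add (continuous_id.smul continuous_const)
  have hσfcont : Continuous σf := by
    apply continuous_const.add (continuous_id.smul continuous_const)
  have hDcont : Continuous D := (hGc.comp hγcont).sub hσfcont
  have hHcont : ∀ lam, Continuous (H lam) :=
    fun lam => (hGc.comp hγcont).sub (continuous_const.smul hDcont)
  have hH0 : ∀ lam, H lam 0 = G y := by
    intro lam; simp [hHdef, hDdef, hσfdef, hγ0]
  have hH1 : ∀ lam, H lam 1 = G x := by
    intro lam; simp [hHdef, hDdef, hσfdef, hγ1]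
  have hγdiff : ∀ s t : ℝ, γ s - γ t = (s - t) • (x - y) := by
    intro s t; simp only [hγdef, sub_smul]; abel
  have hσfdiff : ∀ s t : ℝ, σf s - σf t = (s - t) • (G x - G y) := by
    intro s t; simp only [hσfdef, sub_smul]; abel
  have hGγ : ∀ s t : ℝ, ‖G (γ s) - G (γ t)‖ ≤ C₁ * ‖x - y‖ * |s - t| := by
    intro s t
    refine le_trans (hGlip _ _) ?_
    rw [hγdiff, norm_smul, Real.norm_eq_abs]
    ring_nf
    nlinarith [abs_nonneg (s - t), norm_nonneg (x - y), hGlip x y, norm_nonneg (G x - G y)]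
  set L : ℝ := 2 * (C₁ * ‖x - y‖) + ‖G x - G y‖ with hLdef
  have hLnn : 0 ≤ L := by positivity
  have hHlip : ∀ lam ∈ Icc (0:ℝ) 1, ∀ s ∈ Icc (0:ℝ) 1, ∀ t ∈ Icc (0:ℝ) 1,
      ‖H lam s - H lam t‖ ≤ L * |s - t| := by
    intro lam hlam s _ t _
    have hdiff : H lam s - H lam t = (G (γ s) - G (γ t)) - lam • (D s - D t) := by
      simp only [hHdef, smul_sub]; abel
    have hD : ‖D s - D t‖ ≤ (C₁ * ‖x - y‖ + ‖G x - G y‖) * |s - t| := by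
      have h1 : D s - D t = (G (γ s) - G (γ t)) - (σf s - σf t) := by
        simp only [hDdef]; abel
      rw [h1]
      refine le_trans (norm_sub_le _ _) ?_
      rw [hσfdiff, norm_smul, Real.norm_eq_abs]
      have := hGγ s t
      nlinarith [abs_nonneg (s - t)]
    rw [hdiff]
    refine le_trans (norm_sub_le _ _) ?_
    rw [norm_smul, Real.norm_eq_abs]
    have hlam1 : |lam| ≤ 1 := abs_le.2 ⟨by linarith [hlam.1], hlam.2⟩
    have := hGγ s t
    have h2 : |lam| * ‖D s - D t‖ ≤ ‖D s - D t‖ := by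
      nlinarith [norm_nonneg (D s - D t)]
    have h3 := hD
    rw [hLdef]
    nlinarith [abs_nonneg (s - t), norm_nonneg (D s - D t)]
  have hex : ∀ lam : ℝ, ∃ c : ℝ → X, lam ∈ Icc (0:ℝ) 1 →
      ContinuousOn c (Icc 0 1) ∧ c 0 = y ∧ ∀ s ∈ Icc (0:ℝ) 1, G (c s) = H lam s := by
    intro lam
    by_cases hlam : lam ∈ Icc (0:ℝ) 1
    · obtain ⟨c, hc⟩ := exist hch hGc hKpos.le hLnn (hHcont lam) (hHlip lam hlam)
        (show G y = H lam 0 from (hH0 lam).symm)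
      exact ⟨c, fun _ => hc⟩
    · exact ⟨fun _ => y, fun h => absurd h hlam⟩
  choose f hf using hex
  set Φ : ℝ → X := fun lam => f lam 1 with hΦdef
  have h1I : (1:ℝ) ∈ Icc (0:ℝ) 1 := right_mem_Icc.2 zero_le_one
  have h0I : (0:ℝ) ∈ Icc (0:ℝ) 1 := left_mem_Icc.2 zero_le_one
  have hGΦ : ∀ lam ∈ Icc (0:ℝ) 1, G (Φ lam) = G x := by
    intro lam hlam
    rw [hΦdef]
    simp only
    rw [(hf lam hlam).2.2 1 h1I, hH1]
  -- boundedness of D on [0,1]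
  obtain ⟨M, hM⟩ := (isCompact_Icc (a := (0:ℝ)) (b := 1)).exists_bound_of_continuousOn
    hDcont.continuousOn
  have hM0 : 0 ≤ M := le_trans (norm_nonneg _) (hM 0 h0I)
  -- continuity of the endpoint map
  have hΦcont : ContinuousOn Φ (Icc 0 1) := by
    intro lam hlam
    rw [Metric.continuousWithinAt_iff]
    intro ε hε
    obtain ⟨hc, hc0, hlift⟩ := hf lam hlam
    have hKc : IsCompact (f lam '' Icc 0 1) := isCompact_Icc.image_of_continuousOn hc
    obtain ⟨ρ₀, hρ₀, hAL⟩ := tube hch.loc hKc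
    set ρ := min ρ₀ (ε / 2) with hρdef
    have hρpos : 0 < ρ := lt_min hρ₀ (by linarith)
    set δ := ρ / (2 * K * (M + 1)) with hδdef
    have hδpos : 0 < δ := by positivity
    refine ⟨δ, hδpos, ?_⟩
    intro lam' hlam' hdist
    obtain ⟨hc', hc'0, hlift'⟩ := hf lam' hlam'
    have hmain := pert hρpos (c := f lam) (c' := f lam')
      (fun t ht u hu v hv => hAL (f lam t) (mem_image_of_mem _ ht)
        u (closedBall_subset_closedBall (min_le_left _ _) hu)
        v (closedBall_subset_closedBall (min_le_left _ _) hv))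
      hc hc' (hc'0.trans hc0.symm) ?_
    · have h1 := hmain 1 h1I
      rw [dist_eq_norm]
      calc ‖Φ lam' - Φ lam‖ ≤ ρ := h1
        _ ≤ ε / 2 := min_le_right _ _
        _ < ε := by linarith
    · intro t ht
      rw [hlift' t ht, hlift t ht]
      have hHd : H lam' t - H lam t = (lam - lam') • D t := by
        simp only [hHdef, sub_smul]; abel
      rw [hHd, norm_smul, Real.norm_eq_abs]
      have habs : |lam - lam'| ≤ δ := by
        rw [abs_sub_comm, ← Real.dist_eq]
        exact hdist.le
      have hDb : ‖D t‖ ≤ M := hM t ht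
      have hA : (0:ℝ) < 2 * K * (M + 1) := by positivity
      have hδA : δ * (2 * K * (M + 1)) = ρ := div_mul_cancel₀ _ (ne_of_gt hA)
      have h1 : |lam - lam'| * ‖D t‖ ≤ δ * M := mul_le_mul habs hDb (norm_nonneg _) hδpos.le
      have h2 := mul_le_mul_of_nonneg_left h1 hKpos.le
      nlinarith [h2, mul_pos hKpos hδpos, hδA]
  -- the lift at `lam = 0` is the straight segment `γ`
  have hx0 : Φ 0 = x := by
    obtain ⟨hc, hc0, hlift⟩ := hf 0 h0I
    have huniq := uniq hch.loc hc hγcont.continuousOn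
      (fun s hs => by rw [hlift s hs]; simp [hHdef]) (hc0.trans hγ0.symm)
    rw [hΦdef]
    simp only
    rw [huniq h1I, hγ1]
  -- monodromy : clopen argument in lam
  have hsub : Icc (0:ℝ) 1 ⊆ {lam | Φ lam = x} := by
    apply IsClosed.Icc_subset_of_forall_mem_nhdsWithin
    · have heq : {lam | Φ lam = x} ∩ Icc (0:ℝ) 1 =
          Icc (0:ℝ) 1 ∩ (fun lam => Φ lam - x) ⁻¹' {0} := by
        ext lam
        simp only [mem_inter_iff, mem_setOf_eq, mem_preimage, mem_singleton_iff, sub_eq_zero]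
        tauto
      rw [heq]
      exact (hΦcont.sub continuousOn_const).preimage_isClosed_of_isClosed
        isClosed_Icc isClosed_singleton
    · exact hx0
    · rintro lam ⟨hlam, hlamI⟩
      obtain ⟨r, hr, hAL⟩ := hch.loc x
      obtain ⟨δ, hδ, hb⟩ := Metric.continuousWithinAt_iff.1
        (hΦcont lam (Ico_subset_Icc_self hlamI)) r hr
      rw [mem_nhdsGT_iff_exists_Ioc_subset]
      refine ⟨min 1 (lam + δ / 2), ?_, ?_⟩
      · simp only [mem_Ioi, lt_min_iff]
        exact ⟨hlamI.2, by linarith⟩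
      · intro lam' hlam'
        have hlam'I : lam' ∈ Icc (0:ℝ) 1 :=
          ⟨le_trans hlamI.1 hlam'.1.le, le_trans hlam'.2 (min_le_left _ _)⟩
        have hd : dist lam' lam < δ := by
          rw [Real.dist_eq, abs_of_nonneg (by linarith [hlam'.1.le])]
          have : lam' - lam ≤ δ / 2 := by
            have := le_trans hlam'.2 (min_le_right _ _); linarith
          linarith
        have hball : Φ lam' ∈ ball x r := by
          rw [mem_ball, ← hlam]
          exact hb hlam'I hd
        have h2 := hAL (Φ lam') hball x (mem_ball_self hr)
        rw [hGΦ lam' hlam'I] at h2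
        simp only [sub_self, norm_zero, mul_zero] at h2
        have h3 : ‖Φ lam' - x‖ ≤ 0 := h2
        show Φ lam' = x
        rw [← sub_eq_zero]
        exact norm_eq_zero.1 (le_antisymm h3 (norm_nonneg _))
  -- conclude with `lam = 1`
  obtain ⟨hc, hc0, hlift⟩ := hf 1 h1I
  have hf11 : f 1 1 = x := hsub h1I
  have hσflip : ∀ s ∈ Icc (0:ℝ) 1, ∀ t ∈ Icc (0:ℝ) 1, ‖σf s - σf t‖ ≤ ‖G x - G y‖ * |s - t| := by
    intro s _ t _
    rw [hσfdiff, norm_smul, Real.norm_eq_abs]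
    ring_nf
    exact le_refl _
  have hfin := lip hch.loc hKpos.le (σ := σf) (u := 0) (T := 1) (c := f 1) hσflip hc
    (fun s hs => by rw [hlift s hs]; simp [hHdef, hDdef])
  have h2 := hfin 1 h1I
  rw [hf11, hc0] at h2
  calc ‖x - y‖ ≤ K * ‖G x - G y‖ * (1 - 0) := h2
    _ = K * ‖G x - G y‖ := by ring

end

end Stmt11Aux

open Set Metric Stmt11Aux in
theorem stmt_11 {X V : Type*} [NormedAddCommGroup X] [NormedSpace ℝ X] [CompleteSpace X]
    [NormedAddCommGroup V] [NormedSpace ℝ V] [CompleteSpace V]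
    (G : X → V) (G' : X → X ≃L[ℝ] V)
    (hderiv : ∀ x, HasFDerivAt G (G' x : X →L[ℝ] V) x)
    (hcont : Continuous fun x => (G' x : X →L[ℝ] V))
    (C₁ Cinv : ℝ) (hC₁ : 0 < C₁)
    (hbound : ∀ x, ‖(G' x : X →L[ℝ] V)‖ ≤ C₁)
    (hboundinv : ∀ x, ‖((G' x).symm : V →L[ℝ] X)‖ ≤ Cinv) :
    ∀ x y : X, C₁⁻¹ * ‖G x - G y‖ ≤ ‖x - y‖ ∧ ‖x - y‖ ≤ Cinv * ‖G x - G y‖ := by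
  have hGlipW : LipschitzWith C₁.toNNReal G := by
    rw [← lipschitzOnWith_univ]
    apply convex_univ.lipschitzOnWith_of_nnnorm_hasFDerivWithin_le
      (fun z _ => (hderiv z).hasFDerivWithinAt)
    intro z _
    rw [← NNReal.coe_le_coe, coe_nnnorm, Real.coe_toNNReal _ hC₁.le]
    exact hbound z
  have hGlip : ∀ u v : X, ‖G u - G v‖ ≤ C₁ * ‖u - v‖ := by
    intro u v
    have := hGlipW.dist_le_mul u v
    rwa [dist_eq_norm, dist_eq_norm, Real.coe_toNNReal _ hC₁.le] at this
  intro x y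
  constructor
  · rw [inv_mul_le_iff₀ hC₁]
    exact hGlip x y
  · by_cases hxy : x = y
    · simp [hxy]
    · have : Nontrivial X := ⟨⟨x, y, hxy⟩⟩
      have hGc : Continuous G := hGlipW.continuous
      have hbig : ∀ K, Cinv < K → ‖x - y‖ ≤ K * ‖G x - G y‖ := fun K hK =>
        key (mk_chart hderiv hcont hboundinv hK) hGc
          (lt_of_le_of_lt ((norm_nonneg _).trans (hboundinv x)) hK) hGlip x y
      by_contra hcon
      push_neg at hcon
      rcases eq_or_lt_of_le (norm_nonneg (G x - G y)) with h0 | hpos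
      · have h1 := hbig (Cinv + 1) (by linarith)
        rw [← h0] at h1 hcon
        simp only [mul_zero] at h1 hcon
        linarith
      · have hd : Cinv < ‖x - y‖ / ‖G x - G y‖ := (lt_div_iff₀ hpos).2 hcon
        set K := (Cinv + ‖x - y‖ / ‖G x - G y‖) / 2 with hKdef
        have hK1 : Cinv < K := by rw [hKdef]; linarith
        have hK2 : K < ‖x - y‖ / ‖G x - G y‖ := by rw [hKdef]; linarith
        have hK3 : K * ‖G x - G y‖ < ‖x - y‖ := (lt_div_iff₀ hpos).1 hK2
        have := hbig K hK1
        linarith
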